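/- For a greedy maximization of a monotone non-decreasing submodular set function F with F(∅)=0 over subsets of size at most T of a finite ground set, the greedy solution A^G satisfies F(A^G) ≥ (1 − 1/e) · max_{|A|≤T} F(A). -/

import Mathlib

/-- Nemhauser–Wolsey–Fisher guarantee.  For greedy maximization of a monotone
non-decreasing submodular set function `F` with `F ∅ = 0` over subsets of size at
most `T` of a finite ground set, the greedy solution `A T` (built by `T` steps of
adding an element of maximum marginal gain) satisfies
`F(A T) ≥ (1 - 1/e) · max_{|B| ≤ T} F(B)`. -/
theorem greedy_one_minus_inv_e {V : Type*} [DecidableEq V] [Fintype V]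
    (F : Finset V → ℝ)
    (hmono : ∀ A B : Finset V, A ⊆ B → F A ≤ F B)
    (hsub : ∀ A B : Finset V, A ⊆ B → ∀ x ∉ B,
      F (insert x B) - F B ≤ F (insert x A) - F A)
    (hempty : F ∅ = 0)
    (T : ℕ) (hT : 1 ≤ T)
    (A : ℕ → Finset V) (hA0 : A 0 = ∅)
    (hgreedy : ∀ i, ∃ x : V, A (i + 1) = insert x (A i) ∧
      ∀ y : V, F (insert y (A i)) ≤ F (insert x (A i)))
    (B : Finset V) (hB : B.card ≤ T) :
    (1 - Real.exp (-1)) * F B ≤ F (A T) := by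
  have hTpos : (0:ℝ) < (T:ℝ) := by exact_mod_cast Nat.lt_of_lt_of_le Nat.zero_lt_one hT
  -- submodular telescoping bound
  have key : ∀ (C S : Finset V), F (S ∪ C) ≤ F S + ∑ x ∈ C, (F (insert x S) - F S) := by
    intro C
    induction C using Finset.induction_on with
    | empty => intro S; simp
    | @insert a C' h ih =>
      intro S
      rw [Finset.union_insert, Finset.sum_insert h]
      by_cases ha : a ∈ S ∪ C'
      · rw [Finset.insert_eq_self.mpr ha]
        have h0 : F S ≤ F (insert a S) := hmono S (insert a S) (Finset.subset_insert _ _)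
        have := ih S
        linarith
      · have h1 := hsub S (S ∪ C') Finset.subset_union_left a ha
        have := ih S
        linarith
  have hFB0 : 0 ≤ F B := by
    have := hmono ∅ B (Finset.empty_subset B); rw [hempty] at this; exact this
  have step : ∀ i, F B - F (A (i+1)) ≤ (1 - 1/(T:ℝ)) * (F B - F (A i)) := by
    intro i
    obtain ⟨x, hx, hmax⟩ := hgreedy i
    have hg : ∀ y ∈ B, F (insert y (A i)) - F (A i) ≤ F (A (i+1)) - F (A i) := by
      intro y _
      have := hmax y
      rw [hx]; linarith
    have h1 : F B ≤ F (A i ∪ B) := hmono B _ Finset.subset_union_right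
    have h2 := key B (A i)
    have h3 : ∑ x ∈ B, (F (insert x (A i)) - F (A i)) ≤
        (B.card : ℝ) * (F (A (i+1)) - F (A i)) := by
      calc ∑ x ∈ B, (F (insert x (A i)) - F (A i))
          ≤ ∑ _x ∈ B, (F (A (i+1)) - F (A i)) := Finset.sum_le_sum hg
        _ = (B.card : ℝ) * (F (A (i+1)) - F (A i)) := by
            rw [Finset.sum_const, nsmul_eq_mul]
    have hgpos : 0 ≤ F (A (i+1)) - F (A i) := by
      have := hmono (A i) (A (i+1)) (by rw [hx]; exact Finset.subset_insert _ _)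
      linarith
    have h4 : (B.card:ℝ) ≤ (T:ℝ) := by exact_mod_cast hB
    have h5 : F B ≤ F (A i) + (T:ℝ) * (F (A (i+1)) - F (A i)) := by nlinarith
    have hc : (1 - 1/(T:ℝ)) * (F B - F (A i)) * (T:ℝ) =
        ((T:ℝ) - 1) * (F B - F (A i)) := by field_simp
    exact (mul_le_mul_iff_of_pos_right hTpos).mp (by rw [hc]; nlinarith)
  have hc0 : 0 ≤ 1 - 1/(T:ℝ) := by
    have : 1/(T:ℝ) ≤ 1 := by
      rw [div_le_one hTpos]; exact_mod_cast hT
    linarith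
  have iter : ∀ i, F B - F (A i) ≤ (1 - 1/(T:ℝ))^i * F B := by
    intro i
    induction i with
    | zero => simp [hA0, hempty]
    | succ n ih =>
      calc F B - F (A (n+1)) ≤ (1 - 1/(T:ℝ)) * (F B - F (A n)) := step n
        _ ≤ (1 - 1/(T:ℝ)) * ((1 - 1/(T:ℝ))^n * F B) :=
            mul_le_mul_of_nonneg_left ih hc0
        _ = (1 - 1/(T:ℝ))^(n+1) * F B := by ring
  have hexp : (1 - 1/(T:ℝ))^T ≤ Real.exp (-1) := by
    have h1 : (1 - 1/(T:ℝ)) ≤ Real.exp (-(1/(T:ℝ))) := by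
      have := Real.add_one_le_exp (-(1/(T:ℝ))); linarith
    calc (1 - 1/(T:ℝ))^T ≤ (Real.exp (-(1/(T:ℝ))))^T := pow_le_pow_left₀ hc0 h1 T
      _ = Real.exp ((T:ℝ) * (-(1/(T:ℝ)))) := by rw [← Real.exp_nat_mul]
      _ = Real.exp (-1) := by congr 1; field_simp
  have hfin := iter T
  have : (1 - 1/(T:ℝ))^T * F B ≤ Real.exp (-1) * F B :=
    mul_le_mul_of_nonneg_right hexp hFB0
  linarith
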